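/- arXiv:2007.05628 — 2 statements merged into one kernel-verified Lean document; each statement's English description precedes it below -/
import Mathlib

section
/- Let Q be a finite group, G a Q-group, and M an abelian group regarded as a Q-G module with trivial G- and Q-actions, such that |Q| is invertible in M. Then for every n ≥ 0 there is an isomorphism HH^n_Q(G, M) ≅ H^n_Q(G, M), where H^n_Q(G, M) = H^n(Hom(C_*(G)^Q, M)) is Knudson's cohomology of invariant group chains. -/
namespace InvariantCohomology

noncomputable section

/-- The `i`-th inner face of an inhomogeneous `(n+1)`-tuple: multiply the `i`-th and
`(i+1)`-st entries. -/
def fm {G : Type*} [Group G] {n : ℕ} (g : Fin (n + 1) → G) (i : Fin n) : Fin n → G :=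
  fun j =>
    if (j : ℕ) < (i : ℕ) then g j.castSucc
    else if j = i then g i.castSucc * g i.succ
    else g j.succ

variable (G Q M : Type*) [Group G] [Group Q] [MulDistribMulAction Q G]
  [AddCommGroup M] [DistribMulAction G M] [DistribMulAction Q M]

/-- Inhomogeneous `n`-cochains of `G` with values in `M`. -/
abbrev Cc (n : ℕ) : Type _ := (Fin n → G) → M

/-- The differential of the inhomogeneous cochain complex:
`(δf)(g₁,…,g_{n+1}) = g₁ • f(g₂,…,g_{n+1}) + ∑ᵢ (-1)ⁱ f(g₁,…,gᵢgᵢ₊₁,…,g_{n+1})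
  + (-1)^{n+1} f(g₁,…,gₙ)`. -/
def cb (n : ℕ) : Cc G M n →+ Cc G M (n + 1) where
  toFun f := fun g =>
    g 0 • f (Fin.tail g)
      + ∑ i : Fin n, ((-1 : ℤ) ^ ((i : ℕ) + 1)) • f (fm g i)
      + ((-1 : ℤ) ^ (n + 1)) • f (Fin.init g)
  map_zero' := by funext g; simp
  map_add' f₁ f₂ := by
    funext g
    simp only [Pi.add_apply, smul_add, Finset.sum_add_distrib]
    abel

/-- The differential, re-indexed as a map `Cⁿ⁻¹ → Cⁿ` (zero for `n = 0`). -/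
def cdd : ∀ n : ℕ, Cc G M (n - 1) →+ Cc G M n
  | 0 => 0
  | n + 1 => cb G M n

/-- The action of `q : Q` on cochains, `(q • f)(g₁,…,gₙ) = q • f(q⁻¹g₁,…,q⁻¹gₙ)`. -/
def qcc (q : Q) (n : ℕ) : Cc G M n →+ Cc G M n where
  toFun f := fun g => q • f (q⁻¹ • g)
  map_zero' := by funext g; simp
  map_add' f₁ f₂ := by funext g; simp [smul_add]

/-- The subgroup of `Q`-invariant cochains. -/
def invCc (n : ℕ) : AddSubgroup (Cc G M n) where
  carrier := { f | ∀ q : Q, qcc G Q M q n f = f }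
  add_mem' := by intro a b ha hb q; rw [map_add, ha q, hb q]
  zero_mem' := fun q => map_zero _
  neg_mem' := by intro a ha q; rw [map_neg, ha q]

/-- Invariant cocycles. -/
def ccycQ (n : ℕ) : AddSubgroup (Cc G M n) := (cb G M n).ker ⊓ invCc G Q M n

/-- Coboundaries of invariant cochains. -/
def cbdryQ (n : ℕ) : AddSubgroup (Cc G M n) := (invCc G Q M (n - 1)).map (cdd G M n)

/-- The invariant cohomology `HHⁿ_Q(G, M)`: the cohomology of the subcomplex of
`Q`-invariant cochains. -/
def HHQ (n : ℕ) : Type _ := ccycQ G Q M n ⧸ ((cbdryQ G Q M n).addSubgroupOf (ccycQ G Q M n))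

instance (n : ℕ) : AddCommGroup (HHQ G Q M n) := QuotientAddGroup.Quotient.addCommGroup _

end

end InvariantCohomology



open Finsupp

namespace InvariantHomology

noncomputable section

/-- Inhomogeneous `n`-chains of `G` with coefficients in the abelian group `A`
(with trivial action): the free `A`-span of `n`-tuples of elements of `G`. -/
abbrev Ch (G A : Type*) [AddCommGroup A] (n : ℕ) : Type _ := (Fin n → G) →₀ A

/-- The `i`-th inner face of an inhomogeneous `(n+1)`-tuple: multiply the `i`-th and
`(i+1)`-st entries. -/
def fm {G : Type*} [Group G] {n : ℕ} (g : Fin (n + 1) → G) (i : Fin n) : Fin n → G :=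
  fun j =>
    if (j : ℕ) < (i : ℕ) then g j.castSucc
    else if j = i then g i.castSucc * g i.succ
    else g j.succ

variable (G A : Type*) [Group G] [AddCommGroup A]

/-- The differential of the bar complex (with trivial coefficients):
`d[g₁|⋯|g_{n+1}] = [g₂|⋯|g_{n+1}] + ∑ᵢ (-1)ⁱ [g₁|⋯|gᵢgᵢ₊₁|⋯|g_{n+1}] + (-1)^{n+1} [g₁|⋯|gₙ]`. -/
def bd (n : ℕ) : Ch G A (n + 1) →+ Ch G A n :=
  Finsupp.liftAddHom fun g =>
    (Finsupp.singleAddHom (Fin.tail g) : A →+ Ch G A n)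
      + ∑ i : Fin n, ((-1 : ℤ) ^ ((i : ℕ) + 1)) • (Finsupp.singleAddHom (fm g i) : A →+ Ch G A n)
      + ((-1 : ℤ) ^ (n + 1)) • (Finsupp.singleAddHom (Fin.init g) : A →+ Ch G A n)

/-- The differential, re-indexed as a map `Cₙ → C_{n-1}` (zero for `n = 0`). -/
def dd : ∀ n : ℕ, Ch G A n →+ Ch G A (n - 1)
  | 0 => 0
  | n + 1 => bd G A n

/-- Cycles. -/
def cyc (n : ℕ) : AddSubgroup (Ch G A n) := (dd G A n).ker

/-- Boundaries. -/
def bdry (n : ℕ) : AddSubgroup (Ch G A n) := (bd G A n).range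

/-- The group homology `Hₙ(G, A)` with trivial coefficients, computed from the bar complex. -/
def Hn (n : ℕ) : Type _ := cyc G A n ⧸ ((bdry G A n).addSubgroupOf (cyc G A n))

instance (n : ℕ) : AddCommGroup (Hn G A n) :=
  QuotientAddGroup.Quotient.addCommGroup _

variable (Q : Type*) [Group Q] [MulDistribMulAction Q G]

/-- The action of `q : Q` on chains, `q • [g₁|⋯|gₙ] = [q g₁|⋯|q gₙ]`. -/
def qch (q : Q) (n : ℕ) : Ch G A n →+ Ch G A n :=
  Finsupp.mapDomain.addMonoidHom fun g : Fin n → G => q • g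

/-- The subgroup of `Q`-invariant chains. -/
def invCh (n : ℕ) : AddSubgroup (Ch G A n) where
  carrier := { x | ∀ q : Q, qch G A Q q n x = x }
  add_mem' := by intro a b ha hb q; rw [map_add, ha q, hb q]
  zero_mem' := fun q => map_zero _
  neg_mem' := by intro a ha q; rw [map_neg, ha q]

/-- Invariant cycles. -/
def cycQ (n : ℕ) : AddSubgroup (Ch G A n) := cyc G A n ⊓ invCh G A Q n

/-- Boundaries of invariant chains. -/
def bdryQ (n : ℕ) : AddSubgroup (Ch G A n) := (invCh G A Q (n + 1)).map (bd G A n)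

/-- The homology `Hₙ^Q(G, A)` of the subcomplex of `Q`-invariant chains. -/
def HQ (n : ℕ) : Type _ := cycQ G A Q n ⧸ ((bdryQ G A Q n).addSubgroupOf (cycQ G A Q n))

instance (n : ℕ) : AddCommGroup (HQ G A Q n) :=
  QuotientAddGroup.Quotient.addCommGroup _

/-- The natural map `H_*^Q(G, A) → H_*(G, A)` induced by the inclusion of the
invariant subcomplex in the bar complex. -/
def iStar (n : ℕ) : HQ G A Q n →+ Hn G A n :=
  QuotientAddGroup.map _ _
    (AddSubgroup.inclusion (inf_le_left : cycQ G A Q n ≤ cyc G A n))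
    (by
      intro x hx
      rw [AddSubgroup.mem_addSubgroupOf] at hx
      obtain ⟨y, -, hy⟩ := hx
      exact ⟨y, hy⟩)

theorem tail_qsmul (q : Q) {n : ℕ} (g : Fin (n + 1) → G) :
    Fin.tail (q • g) = q • Fin.tail g := rfl

theorem init_qsmul (q : Q) {n : ℕ} (g : Fin (n + 1) → G) :
    Fin.init (q • g) = q • Fin.init g := rfl

theorem fm_qsmul (q : Q) {n : ℕ} (g : Fin (n + 1) → G) (i : Fin n) :
    fm (q • g) i = q • fm g i := by
  funext j
  simp only [fm, Pi.smul_apply]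
  split_ifs <;> simp [smul_mul']

theorem qch_single (q : Q) {n : ℕ} (g : Fin n → G) (a : A) :
    qch G A Q q n (Finsupp.single g a) = Finsupp.single (q • g) a :=
  Finsupp.mapDomain_single

theorem bd_single {n : ℕ} (g : Fin (n + 1) → G) (a : A) :
    bd G A n (Finsupp.single g a) =
      Finsupp.single (Fin.tail g) a
        + ∑ i : Fin n, ((-1 : ℤ) ^ ((i : ℕ) + 1)) • Finsupp.single (fm g i) a
        + ((-1 : ℤ) ^ (n + 1)) • Finsupp.single (Fin.init g) a := by
  simp [bd, Finsupp.liftAddHom_apply_single]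

theorem bd_qch (q : Q) (n : ℕ) :
    (bd G A n).comp (qch G A Q q (n + 1)) = (qch G A Q q n).comp (bd G A n) := by
  refine Finsupp.addHom_ext fun g a => ?_
  simp only [AddMonoidHom.comp_apply, qch_single, bd_single, map_add, map_sum, map_zsmul,
    tail_qsmul, init_qsmul, fm_qsmul]

theorem dd_qch (q : Q) (n : ℕ) :
    (dd G A n).comp (qch G A Q q n) = (qch G A Q q (n - 1)).comp (dd G A n) := by
  cases n with
  | zero => ext g a; simp [dd]
  | succ n => exact bd_qch G A Q q n

/-- The action of `q : Q` on cycles. -/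
def qcyc (q : Q) (n : ℕ) : cyc G A n →+ cyc G A n :=
  ((qch G A Q q n).comp (cyc G A n).subtype).codRestrict _ (by
    intro x
    have hx : dd G A n (x : Ch G A n) = 0 := x.2
    have := congrArg (fun f : Ch G A n →+ Ch G A (n - 1) => f (x : Ch G A n)) (dd_qch G A Q q n)
    simp only [AddMonoidHom.comp_apply] at this
    simp only [AddMonoidHom.comp_apply, AddSubgroup.coe_subtype]
    show qch G A Q q n (x : Ch G A n) ∈ cyc G A n
    have hmem : dd G A n (qch G A Q q n (x : Ch G A n)) = 0 := by
      rw [this, hx, map_zero]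
    exact hmem)

/-- The induced action of `q : Q` on the homology `Hₙ(G, A)`. -/
def qHn (q : Q) (n : ℕ) : Hn G A n →+ Hn G A n :=
  QuotientAddGroup.map _ _ (qcyc G A Q q n) (by
    intro x hx
    rw [AddSubgroup.mem_addSubgroupOf] at hx
    obtain ⟨y, hy⟩ := hx
    rw [AddSubgroup.mem_comap, AddSubgroup.mem_addSubgroupOf]
    refine ⟨qch G A Q q (n + 1) y, ?_⟩
    have := congrArg (fun f : Ch G A (n+1) →+ Ch G A n => f y) (bd_qch G A Q q n)
    simp only [AddMonoidHom.comp_apply] at this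
    show bd G A n (qch G A Q q (n+1) y) = _
    rw [this, hy]
    rfl)

/-- The subgroup of `Q`-invariant homology classes `Hₙ(G, A)^Q`. -/
def HnInv (n : ℕ) : AddSubgroup (Hn G A n) where
  carrier := { x | ∀ q : Q, qHn G A Q q n x = x }
  add_mem' := by intro a b ha hb q; rw [map_add, ha q, hb q]
  zero_mem' := fun q => map_zero _
  neg_mem' := by intro a ha q; rw [map_neg, ha q]

theorem qch_mul (q q' : Q) (n : ℕ) :
    qch G A Q (q * q') n = (qch G A Q q n).comp (qch G A Q q' n) := by
  refine Finsupp.addHom_ext fun g a => ?_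
  simp [qch_single, mul_smul]

theorem qHn_mul (q q' : Q) (n : ℕ) (x : Hn G A n) :
    qHn G A Q q n (qHn G A Q q' n x) = qHn G A Q (q * q') n x := by
  induction x using QuotientAddGroup.induction_on with
  | H z =>
    show QuotientAddGroup.mk (qcyc G A Q q n (qcyc G A Q q' n z))
      = QuotientAddGroup.mk (qcyc G A Q (q * q') n z)
    congr 1
    refine Subtype.ext ?_
    show qch G A Q q n (qch G A Q q' n (z : Ch G A n)) = qch G A Q (q * q') n (z : Ch G A n)
    rw [qch_mul]
    rfl

/-- The subgroup of `Hₙ(G, A)` generated by the elements `y - q • y`. -/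
def coinvRel (n : ℕ) : AddSubgroup (Hn G A n) :=
  AddSubgroup.closure {x | ∃ (q : Q) (y : Hn G A n), x = y - qHn G A Q q n y}

/-- The coinvariants `Hₙ(G, A)_Q` of the `Q`-action on homology. -/
def HnCoinv (n : ℕ) : Type _ := Hn G A n ⧸ coinvRel G A Q n

instance (n : ℕ) : AddCommGroup (HnCoinv G A Q n) :=
  QuotientAddGroup.Quotient.addCommGroup _

/-- The norm map `Hₙ(G, A)_Q → Hₙ(G, A)`, sending the class of `x` to `∑_{q ∈ Q} q • x`. -/
def normHn [Fintype Q] (n : ℕ) : HnCoinv G A Q n →+ Hn G A n :=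
  QuotientAddGroup.lift _ (∑ q : Q, qHn G A Q q n) (by
    rw [coinvRel, AddSubgroup.closure_le]
    rintro x ⟨q', y, rfl⟩
    simp only [SetLike.mem_coe, AddMonoidHom.mem_ker, map_sub, AddMonoidHom.finset_sum_apply]
    rw [sub_eq_zero]
    refine Fintype.sum_equiv (Equiv.mulRight q'⁻¹) _ _ fun q => ?_
    show qHn G A Q q n y = qHn G A Q (q * q'⁻¹) n (qHn G A Q q' n y)
    rw [qHn_mul, inv_mul_cancel_right])

section Norm1

variable (G : Type*) [Group G] (Q : Type*) [Group Q] [MulDistribMulAction Q G] [Fintype Q]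

/-- The `Q`-invariant `1`-chain `∑_{q ∈ Q} [q • g]` associated to `g : G`. -/
def ncyc (g : G) : Ch G ℤ 1 :=
  ∑ q : Q, Finsupp.single (fun _ : Fin 1 => q • g) (1 : ℤ)

theorem ncyc_mem (g : G) : ncyc G Q g ∈ cycQ G ℤ Q 1 := by
  constructor
  · show dd G ℤ 1 (ncyc G Q g) = 0
    show bd G ℤ 0 (ncyc G Q g) = 0
    rw [ncyc, map_sum]
    refine Finset.sum_eq_zero fun q _ => ?_
    rw [bd_single]
    have h : Fin.tail (fun _ : Fin 1 => q • g) = Fin.init (fun _ : Fin 1 => q • g) :=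
      Subsingleton.elim _ _
    simp [h]
  · intro q'
    rw [ncyc, map_sum]
    simp only [qch_single]
    refine Fintype.sum_equiv (Equiv.mulLeft q') _ _ fun q => ?_
    congr 1
    funext _
    show q' • (q • g) = (q' * q) • g
    rw [mul_smul]

/-- The norm map `N : G → H₁^Q(G, ℤ)`, sending `g` to the class of `∑_{q ∈ Q} [q • g]`. -/
def NQ (g : G) : HQ G ℤ Q 1 :=
  QuotientAddGroup.mk ⟨ncyc G Q g, ncyc_mem G Q g⟩

end Norm1

end

end InvariantHomology

namespace InvariantHomology

noncomputable section

variable (G Q M : Type*) [Group G] [Group Q] [MulDistribMulAction Q G] [AddCommGroup M]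

/-- The differential of the bar complex restricted to `Q`-invariant chains. -/
def bdInv (n : ℕ) : invCh G ℤ Q (n + 1) →+ invCh G ℤ Q n :=
  ((bd G ℤ n).comp (invCh G ℤ Q (n + 1)).subtype).codRestrict _ (by
    intro x
    intro q
    have := congrArg (fun f : Ch G ℤ (n + 1) →+ Ch G ℤ n => f (x : Ch G ℤ (n + 1)))
      (bd_qch G ℤ Q q n)
    simp only [AddMonoidHom.comp_apply] at this
    show qch G ℤ Q q n (bd G ℤ n (x : Ch G ℤ (n + 1))) = bd G ℤ n (x : Ch G ℤ (n + 1))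
    rw [← this, x.2 q])

/-- Knudson's cochains: homomorphisms on the group of `Q`-invariant chains. -/
def KC (n : ℕ) : Type _ := invCh G ℤ Q n →+ M

instance (n : ℕ) : AddCommGroup (KC G Q M n) := AddMonoidHom.instAddCommGroup

/-- The differential of Knudson's cochain complex: precomposition with the differential of
invariant chains. -/
def kd (n : ℕ) : KC G Q M n →+ KC G Q M (n + 1) where
  toFun f := f.comp (bdInv G Q n)
  map_zero' := AddMonoidHom.zero_comp _
  map_add' f₁ f₂ := AddMonoidHom.add_comp _ _ _

/-- The Knudson differential, re-indexed (zero in degree `0`). -/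
def kdd : ∀ n : ℕ, KC G Q M (n - 1) →+ KC G Q M n
  | 0 => 0
  | n + 1 => kd G Q M n

/-- Knudson's cohomology of invariant group chains `Hⁿ_Q(G, M) = Hⁿ(Hom(C_*(G)^Q, M))`. -/
def HK (n : ℕ) : Type _ :=
  (kd G Q M n).ker ⧸ ((kdd G Q M n).range.addSubgroupOf (kd G Q M n).ker)

instance (n : ℕ) : AddCommGroup (HK G Q M n) := QuotientAddGroup.Quotient.addCommGroup _

end

end InvariantHomology


namespace IsoAux

open InvariantCohomology InvariantHomology

noncomputable section

variable {G Q M : Type*} [Group G] [Group Q] [MulDistribMulAction Q G]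
  [AddCommGroup M] [DistribMulAction G M] [DistribMulAction Q M]

theorem fm_eq {n : ℕ} (g : Fin (n + 1) → G) (i : Fin n) :
    InvariantHomology.fm g i = InvariantCohomology.fm g i := rfl

theorem fmC_qsmul (q : Q) {n : ℕ} (g : Fin (n + 1) → G) (i : Fin n) :
    InvariantCohomology.fm (q • g) i = q • InvariantCohomology.fm g i :=
  fm_qsmul (G := G) (Q := Q) q g i

theorem tailC (q : Q) {n : ℕ} (g : Fin (n + 1) → G) :
    Fin.tail (q • g) = q • Fin.tail g := rfl

theorem initC (q : Q) {n : ℕ} (g : Fin (n + 1) → G) :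
    Fin.init (q • g) = q • Fin.init g := rfl

/-- The pairing between cochains and chains. -/
def Phi (n : ℕ) : Cc G M n →+ (Ch G ℤ n →+ M) where
  toFun f := Finsupp.liftAddHom fun g => zmultiplesHom M (f g)
  map_zero' := by
    refine Finsupp.addHom_ext fun g a => ?_
    simp [Finsupp.liftAddHom_apply_single]
  map_add' f f' := by
    refine Finsupp.addHom_ext fun g a => ?_
    simp [Finsupp.liftAddHom_apply_single, smul_add]

theorem Phi_single (n : ℕ) (f : Cc G M n) (g : Fin n → G) (a : ℤ) :
    Phi n f (Finsupp.single g a) = a • f g := by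
  simp [Phi, Finsupp.liftAddHom_apply_single]

theorem phi_chain (hG : ∀ (g : G) (m : M), g • m = m) (n : ℕ) (f : Cc G M n)
    (x : Ch G ℤ (n + 1)) :
    Phi n f (bd G ℤ n x) = Phi (n + 1) (cb G M n f) x := by
  have h : ((Phi n f).comp (bd G ℤ n) : Ch G ℤ (n+1) →+ M) = Phi (n + 1) (cb G M n f) := by
    refine Finsupp.addHom_ext fun g a => ?_
    simp only [AddMonoidHom.comp_apply, bd_single, map_add, map_sum, map_zsmul, Phi_single,
      fm_eq]
    rw [show (cb G M n f) g = g 0 • f (Fin.tail g)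
          + ∑ i : Fin n, ((-1 : ℤ) ^ ((i : ℕ) + 1)) • f (InvariantCohomology.fm g i)
          + ((-1 : ℤ) ^ (n + 1)) • f (Fin.init g) from rfl]
    rw [hG]
    simp only [smul_add, Finset.smul_sum]
    congr 1
    congr 1
    refine Finset.sum_congr rfl fun i _ => ?_
    · rw [smul_comm]
    · rw [smul_comm]
  exact congrArg (fun φ : Ch G ℤ (n+1) →+ M => φ x) h

theorem cb_qcc (hG : ∀ (g : G) (m : M), g • m = m) (hQ : ∀ (q : Q) (m : M), q • m = m)
    (q : Q) (n : ℕ) (f : Cc G M n) :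
    qcc G Q M q (n + 1) (cb G M n f) = cb G M n (qcc G Q M q n f) := by
  funext g
  show q • (cb G M n f) (q⁻¹ • g) = (cb G M n (qcc G Q M q n f)) g
  rw [hQ]
  show (q⁻¹ • g) 0 • f (Fin.tail (q⁻¹ • g))
      + ∑ i : Fin n, ((-1 : ℤ) ^ ((i : ℕ) + 1)) • f (InvariantCohomology.fm (q⁻¹ • g) i)
      + ((-1 : ℤ) ^ (n + 1)) • f (Fin.init (q⁻¹ • g))
    = g 0 • (qcc G Q M q n f) (Fin.tail g)
      + ∑ i : Fin n, ((-1 : ℤ) ^ ((i : ℕ) + 1)) • (qcc G Q M q n f) (InvariantCohomology.fm g i)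
      + ((-1 : ℤ) ^ (n + 1)) • (qcc G Q M q n f) (Fin.init g)
  have hq : ∀ h : Fin n → G, (qcc G Q M q n f) h = f (q⁻¹ • h) := by
    intro h
    show q • f (q⁻¹ • h) = f (q⁻¹ • h)
    rw [hQ]
  simp only [hq, hG, tailC, initC, fmC_qsmul]

variable (Q) in
/-- The norm chain `∑_{q ∈ Q} [q • g]`. -/
def nch [Fintype Q] (n : ℕ) (g : Fin n → G) : Ch G ℤ n :=
  ∑ q : Q, Finsupp.single (q • g) (1 : ℤ)

theorem nch_mem [Fintype Q] (n : ℕ) (g : Fin n → G) : nch Q n g ∈ invCh G ℤ Q n := by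
  intro q'
  rw [nch, map_sum]
  simp only [qch_single]
  exact Fintype.sum_equiv (Equiv.mulLeft q') _ _ fun q => by
    rw [show (Equiv.mulLeft q') q = q' * q from rfl, mul_smul]

theorem nch_qsmul [Fintype Q] (n : ℕ) (q' : Q) (g : Fin n → G) :
    nch Q n (q' • g) = nch Q n g := by
  rw [nch, nch]
  exact Fintype.sum_equiv (Equiv.mulRight q') _ _ fun q => by
    rw [show (Equiv.mulRight q') q = q * q' from rfl, mul_smul]

theorem invCc_apply_smul (hQ : ∀ (q : Q) (m : M), q • m = m) {n : ℕ} {f : Cc G M n}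
    (hf : f ∈ invCc G Q M n) (q : Q) (g : Fin n → G) : f (q • g) = f g := by
  have h := congrFun (hf q) (q • g)
  have h2 : q • f (q⁻¹ • q • g) = f (q • g) := h
  rw [inv_smul_smul, hQ] at h2
  exact h2.symm

theorem invCh_apply_smul {n : ℕ} {x : Ch G ℤ n} (hx : x ∈ invCh G ℤ Q n)
    (q : Q) (g : Fin n → G) : x (q • g) = x g := by
  have h := hx q
  have h2 : (qch G ℤ Q q n x) (q • g) = x g :=
    Finsupp.mapDomain_apply (MulAction.injective q) x g
  rw [h] at h2
  exact h2

theorem Phi_nch [Fintype Q] (hQ : ∀ (q : Q) (m : M), q • m = m) {n : ℕ} {f : Cc G M n}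
    (hf : f ∈ invCc G Q M n) (g : Fin n → G) :
    Phi n f (nch Q n g) = (Fintype.card Q : ℤ) • f g := by
  rw [nch, map_sum]
  simp only [Phi_single, one_smul]
  rw [Finset.sum_congr rfl fun q _ => invCc_apply_smul hQ hf q g]
  rw [Finset.sum_const, Finset.card_univ, natCast_zsmul]

theorem card_smul_eq [Fintype Q] (n : ℕ) (x : Ch G ℤ n) (hx : x ∈ invCh G ℤ Q n) :
    (Fintype.card Q : ℤ) • x = ∑ g ∈ x.support, x g • nch Q n g := by
  classical
  ext g'
  rw [Finsupp.smul_apply, Finsupp.finset_sum_apply]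
  have h1 : ∀ g : Fin n → G, (x g • nch Q n g) g'
      = ∑ q : Q, if g = q⁻¹ • g' then x g else 0 := by
    intro g
    rw [Finsupp.smul_apply, nch, Finsupp.finset_sum_apply, Finset.smul_sum]
    refine Finset.sum_congr rfl fun q _ => ?_
    rw [Finsupp.single_apply, smul_ite, smul_zero, smul_eq_mul, mul_one]
    simp only [smul_eq_iff_eq_inv_smul]
  rw [Finset.sum_congr rfl fun g _ => h1 g, Finset.sum_comm]
  have h2 : ∀ q : Q, (∑ g ∈ x.support, if g = q⁻¹ • g' then x g else 0) = x g' := by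
    intro q
    rw [Finset.sum_ite_eq' x.support (q⁻¹ • g') x]
    by_cases hmem : q⁻¹ • g' ∈ x.support
    · rw [if_pos hmem]
      have := invCh_apply_smul hx q⁻¹ g'
      exact this
    · rw [if_neg hmem]
      have h0 : x (q⁻¹ • g') = 0 := Finsupp.notMem_support_iff.mp hmem
      rw [← invCh_apply_smul hx q⁻¹ g', h0]
  rw [Finset.sum_congr rfl fun q _ => h2 q, Finset.sum_const, Finset.card_univ, natCast_zsmul]

variable (Q) in
/-- The comparison map, sending a cochain to the corresponding homomorphism on
invariant chains. -/
def Psi (n : ℕ) (f : Cc G M n) : invCh G ℤ Q n →+ M :=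
  (Phi n f).comp (invCh G ℤ Q n).subtype

theorem Psi_zero (n : ℕ) : Psi Q n (0 : Cc G M n) = 0 := by
  rw [Psi, map_zero, AddMonoidHom.zero_comp]

theorem Psi_add (n : ℕ) (f f' : Cc G M n) :
    Psi Q n (f + f') = Psi Q n f + Psi Q n f' := by
  rw [Psi, Psi, Psi, map_add, AddMonoidHom.add_comp]

theorem Psi_sub (n : ℕ) (f f' : Cc G M n) :
    Psi Q n (f - f') = Psi Q n f - Psi Q n f' := by
  rw [Psi, Psi, Psi, map_sub, AddMonoidHom.sub_comp]

theorem Psi_inj [Fintype Q] (hQ : ∀ (q : Q) (m : M), q • m = m)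
    (hM : Function.Bijective fun m : M => (Fintype.card Q : ℤ) • m)
    {n : ℕ} {f : Cc G M n} (hf : f ∈ invCc G Q M n) (h0 : Psi Q n f = 0) : f = 0 := by
  funext g
  have h := congrArg (fun φ : invCh G ℤ Q n →+ M => φ ⟨nch Q n g, nch_mem n g⟩) h0
  have h2 : Phi n f (nch Q n g) = 0 := h
  rw [Phi_nch hQ hf] at h2
  have := hM.1 (a₁ := f g) (a₂ := 0) (by simpa using h2)
  simpa using this

theorem Psi_chain (hG : ∀ (g : G) (m : M), g • m = m) (n : ℕ) (f : Cc G M n) :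
    Psi Q (n + 1) (cb G M n f) = (Psi Q n f).comp (bdInv G Q n) := by
  refine AddMonoidHom.ext fun x => ?_
  show Phi (n + 1) (cb G M n f) x.1 = Phi n f ((bdInv G Q n x : Ch G ℤ n))
  rw [show ((bdInv G Q n x : Ch G ℤ n)) = bd G ℤ n x.1 from rfl]
  exact (phi_chain hG n f x.1).symm

theorem Psi_surj [Fintype Q] (hQ : ∀ (q : Q) (m : M), q • m = m)
    (hM : Function.Bijective fun m : M => (Fintype.card Q : ℤ) • m)
    (n : ℕ) (φ : invCh G ℤ Q n →+ M) :
    ∃ f ∈ invCc G Q M n, Psi Q n f = φ := by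
  classical
  set e := Equiv.ofBijective _ hM with he
  set f : Cc G M n := fun g => e.symm (φ ⟨nch Q n g, nch_mem n g⟩) with hfdef
  have hcsmul : ∀ m : M, (Fintype.card Q : ℤ) • m = e m := fun m => rfl
  have hcf : ∀ g : Fin n → G, (Fintype.card Q : ℤ) • f g = φ ⟨nch Q n g, nch_mem n g⟩ := by
    intro g
    rw [hcsmul]
    exact e.apply_symm_apply _
  have hfi : f ∈ invCc G Q M n := by
    intro q
    funext g
    show q • f (q⁻¹ • g) = f g
    rw [hQ]
    have : (⟨nch Q n (q⁻¹ • g), nch_mem n _⟩ : invCh G ℤ Q n)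
        = ⟨nch Q n g, nch_mem n g⟩ := Subtype.ext (nch_qsmul n q⁻¹ g)
    show e.symm (φ ⟨nch Q n (q⁻¹ • g), nch_mem n _⟩) = e.symm (φ ⟨nch Q n g, nch_mem n g⟩)
    rw [this]
  refine ⟨f, hfi, ?_⟩
  refine AddMonoidHom.ext fun x => ?_
  apply hM.1
  show (Fintype.card Q : ℤ) • (Psi Q n f x) = (Fintype.card Q : ℤ) • (φ x)
  rw [← map_zsmul (Psi Q n f), ← map_zsmul φ]
  have hS : (Fintype.card Q : ℤ) • x
      = ∑ g ∈ x.1.support, x.1 g • (⟨nch Q n g, nch_mem n g⟩ : invCh G ℤ Q n) := by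
    refine Subtype.ext ?_
    rw [show (((Fintype.card Q : ℤ) • x : invCh G ℤ Q n) : Ch G ℤ n)
          = (Fintype.card Q : ℤ) • (x : Ch G ℤ n) from rfl]
    rw [card_smul_eq n x.1 x.2]
    rw [show ((∑ g ∈ x.1.support, x.1 g • (⟨nch Q n g, nch_mem n g⟩ : invCh G ℤ Q n)
            : invCh G ℤ Q n) : Ch G ℤ n)
        = (invCh G ℤ Q n).subtype (∑ g ∈ x.1.support,
            x.1 g • (⟨nch Q n g, nch_mem n g⟩ : invCh G ℤ Q n)) from rfl]
    rw [map_sum]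
    rfl
  rw [hS, map_sum, map_sum]
  refine Finset.sum_congr rfl fun g _ => ?_
  rw [map_zsmul, map_zsmul]
  congr 1
  show Phi n f (nch Q n g) = _
  rw [Phi_nch hQ hfi, hcf]


section Main

variable [Fintype Q]

/-- The comparison map as a homomorphism into Knudson cochains. -/
def PsiC (n : ℕ) : ccycQ G Q M n →+ KC G Q M n where
  toFun f := (Psi Q n f.1 : KC G Q M n)
  map_zero' := Psi_zero n
  map_add' a b := Psi_add n a.1 b.1

theorem kd_PsiC (hG : ∀ (g : G) (m : M), g • m = m) (n : ℕ) (f : ccycQ G Q M n) :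
    kd G Q M n (PsiC n f) = 0 := by
  have h1 : kd G Q M n (PsiC n f) = (Psi Q (n + 1) (cb G M n f.1) : KC G Q M (n + 1)) := by
    show ((Psi Q n f.1).comp (bdInv G Q n) : KC G Q M (n + 1)) = _
    exact (Psi_chain hG n f.1).symm
  have h2 : cb G M n f.1 = 0 := f.2.1
  rw [h1, h2]
  exact Psi_zero (n + 1)

/-- The comparison map into Knudson cocycles. -/
def kappa (hG : ∀ (g : G) (m : M), g • m = m) (n : ℕ) :
    ccycQ G Q M n →+ (kd G Q M n).ker :=
  (PsiC n).codRestrict _ fun f => AddMonoidHom.mem_ker.mpr (kd_PsiC hG n f)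

theorem kappa_coe (hG : ∀ (g : G) (m : M), g • m = m) (n : ℕ) (f : ccycQ G Q M n) :
    ((kappa hG n f : KC G Q M n)) = (Psi Q n f.1 : KC G Q M n) := rfl

/-- The comparison map into Knudson cohomology. -/
def rho (hG : ∀ (g : G) (m : M), g • m = m) (n : ℕ) : ccycQ G Q M n →+ HK G Q M n :=
  (QuotientAddGroup.mk' _).comp (kappa hG n)

theorem rho_apply (hG : ∀ (g : G) (m : M), g • m = m) (n : ℕ) (f : ccycQ G Q M n) :
    rho hG n f = QuotientAddGroup.mk (kappa hG n f) := rfl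

theorem rho_surj (hG : ∀ (g : G) (m : M), g • m = m) (hQ : ∀ (q : Q) (m : M), q • m = m)
    (hM : Function.Bijective fun m : M => (Fintype.card Q : ℤ) • m) (n : ℕ) :
    Function.Surjective (rho (Q := Q) (M := M) hG n) := by
  intro y
  induction y using QuotientAddGroup.induction_on with
  | H φ =>
    obtain ⟨f, hf, hfφ⟩ := Psi_surj hQ hM n (φ.1 : invCh G ℤ Q n →+ M)
    have hcb : cb G M n f = 0 := by
      refine Psi_inj hQ hM (f := cb G M n f) ?_ ?_
      · intro q
        rw [cb_qcc hG hQ, hf q]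
      · have h1 : Psi Q (n + 1) (cb G M n f) = (Psi Q n f).comp (bdInv G Q n) :=
          Psi_chain hG n f
        rw [hfφ] at h1
        have h2 : kd G Q M n φ.1 = 0 := AddMonoidHom.mem_ker.mp φ.2
        have h3 : kd G Q M n φ.1 = ((φ.1 : invCh G ℤ Q n →+ M).comp (bdInv G Q n)
            : KC G Q M (n + 1)) := rfl
        rw [h1]
        rw [h3] at h2
        exact h2
    refine ⟨⟨f, ⟨AddMonoidHom.mem_ker.mpr hcb, hf⟩⟩, ?_⟩
    rw [rho_apply]
    exact congrArg _ (Subtype.ext hfφ)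

theorem rho_eq_zero_iff (hG : ∀ (g : G) (m : M), g • m = m) (n : ℕ) (f : ccycQ G Q M n) :
    rho hG n f = 0 ↔ (Psi Q n f.1 : KC G Q M n) ∈ (kdd G Q M n).range := by
  rw [rho_apply]
  exact (QuotientAddGroup.eq_zero_iff (kappa hG n f)).trans
    (by rw [AddSubgroup.mem_addSubgroupOf, kappa_coe]; exact Iff.rfl)

theorem rho_ker_eq (hG : ∀ (g : G) (m : M), g • m = m) (hQ : ∀ (q : Q) (m : M), q • m = m)
    (hM : Function.Bijective fun m : M => (Fintype.card Q : ℤ) • m) (n : ℕ) :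
    (cbdryQ G Q M n).addSubgroupOf (ccycQ G Q M n) = (rho hG n).ker := by
  ext f
  rw [AddSubgroup.mem_addSubgroupOf, AddMonoidHom.mem_ker, rho_eq_zero_iff hG n f]
  constructor
  · rintro hf
    obtain ⟨g, hg, hgf⟩ := hf
    cases n with
    | zero =>
      refine ⟨0, ?_⟩
      have h0 : f.1 = 0 := by rw [← hgf]; rfl
      have h1 : kdd G Q M 0 0 = (0 : KC G Q M 0) := map_zero _
      rw [h1, h0]
      exact (Psi_zero 0).symm
    | succ m =>
      refine ⟨(Psi Q m g : KC G Q M m), ?_⟩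
      have h1 : kdd G Q M (m + 1) (Psi Q m g : KC G Q M m)
          = ((Psi Q m g).comp (bdInv G Q m) : KC G Q M (m + 1)) := rfl
      rw [h1, ← Psi_chain hG m g]
      exact congrArg (fun z => (Psi Q (m + 1) z : KC G Q M (m + 1))) hgf
  · rintro ⟨φ', hφ'⟩
    cases n with
    | zero =>
      have h0 : (Psi Q 0 f.1 : KC G Q M 0) = 0 := by
        rw [← hφ']
        rfl
      have h1 : f.1 = 0 := Psi_inj hQ hM f.2.2 h0
      rw [h1]
      exact zero_mem _
    | succ m =>
      obtain ⟨g, hg, hgψ⟩ := Psi_surj hQ hM m φ'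
      have hcbg : cb G M m g ∈ invCc G Q M (m + 1) := by
        intro q
        rw [cb_qcc hG hQ, hg q]
      have h1 : kdd G Q M (m + 1) φ' = (Psi Q (m + 1) (cb G M m g) : KC G Q M (m + 1)) := by
        rw [← hgψ]
        show ((Psi Q m g).comp (bdInv G Q m) : KC G Q M (m + 1)) = _
        exact (Psi_chain hG m g).symm
      rw [h1] at hφ'
      have h2 : f.1 = cb G M m g := by
        have h3 : Psi Q (m + 1) (f.1 - cb G M m g) = 0 := by
          rw [Psi_sub, hφ', sub_self]
        have h4 : f.1 - cb G M m g ∈ invCc G Q M (m + 1) := sub_mem f.2.2 hcbg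
        have := Psi_inj hQ hM h4 h3
        rwa [sub_eq_zero] at this
      exact ⟨g, hg, h2.symm⟩

end Main

end

end IsoAux

open InvariantCohomology InvariantHomology in
/-- If `M` is a trivial `Q`-`G` module and `|Q|` is invertible in `M`,
then the invariant cohomology `HHⁿ_Q(G, M)` is isomorphic to Knudson's cohomology of
invariant group chains `Hⁿ_Q(G, M)`. -/
theorem invariant_cohomology_iso_knudson
    (G Q M : Type*) [Group G] [Group Q] [MulDistribMulAction Q G]
    [AddCommGroup M] [DistribMulAction G M] [DistribMulAction Q M] [Fintype Q]
    (hGtriv : ∀ (g : G) (m : M), g • m = m)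
    (hQtriv : ∀ (q : Q) (m : M), q • m = m)
    (hM : Function.Bijective fun m : M => (Fintype.card Q : ℤ) • m) (n : ℕ) :
    Nonempty (HHQ G Q M n ≃+ HK G Q M n) := by
  exact ⟨(QuotientAddGroup.quotientAddEquivOfEq (IsoAux.rho_ker_eq hGtriv hQtriv hM n)).trans
    (QuotientAddGroup.quotientKerEquivOfSurjective _ (IsoAux.rho_surj hGtriv hQtriv hM n))⟩
end

section
/- Let Q be a group, H a Q-group, and K an abelian group which is a Q-H module. Then the set of equivalence classes of Q-equivariant group extensions 0 → K → G → H → 1 inducing the given H-action on K and admitting a normalized Q-equivariant section s : H → G is in one-to-one correspondence with the elements of the invariant cohomology group HH²_Q(H, K). -/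
universe u

open InvariantCohomology

variable (Q H K : Type u) [Group Q] [Group H] [MulDistribMulAction Q H]
  [AddCommGroup K] [DistribMulAction H K] [DistribMulAction Q K]

/-- A `Q`-equivariant extension `0 → K → G → H → 1` of the `Q`-group `H` by the
`Q`-`H` module `K`, inducing the given `H`-action on `K` by conjugation, and admitting a
normalized `Q`-equivariant section. -/
structure QExt : Type (u + 1) where
  /-- The middle group of the extension. -/
  G : Type u
  [grp : Group G]
  /-- The inclusion of `K` (written multiplicatively) in `G`. -/
  ι : Multiplicative K →* G
  /-- The projection of `G` onto `H`. -/
  π : G →* H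
  /-- The action of `Q` on `G` by group automorphisms. -/
  act : Q →* MulAut G
  ι_injective : Function.Injective ι
  π_surjective : Function.Surjective π
  /-- Exactness: the image of `K` is the kernel of `G → H`. -/
  range_eq_ker : ι.range = π.ker
  /-- The `Q`-action on `G` restricts to the given `Q`-action on `K`. -/
  act_ι : ∀ (q : Q) (k : Multiplicative K),
    act q (ι k) = ι (Multiplicative.ofAdd (q • k.toAdd))
  /-- The `Q`-action on `G` induces the given `Q`-action on `H`. -/
  act_π : ∀ (q : Q) (g : G), π (act q g) = q • π g
  /-- The conjugation action of `G` on `K` is the given `H`-module structure. -/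
  conj_ι : ∀ (g : G) (k : Multiplicative K),
    g * ι k * g⁻¹ = ι (Multiplicative.ofAdd (π g • k.toAdd))
  /-- The extension admits a normalized `Q`-equivariant section. -/
  exists_section : ∃ s : H → G, (∀ x : H, π (s x) = x) ∧ s 1 = 1
    ∧ ∀ (q : Q) (x : H), act q (s x) = s (q • x)

/-- Equivalence of `Q`-equivariant extensions: a `Q`-equivariant isomorphism of the middle
groups commuting with the inclusions of `K` and the projections onto `H`. -/
def QExtEquiv (E₁ E₂ : QExt Q H K) : Prop :=
  letI := E₁.grp
  letI := E₂.grp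
  ∃ θ : E₁.G ≃* E₂.G,
    (∀ k : Multiplicative K, θ (E₁.ι k) = E₂.ι k)
    ∧ (∀ g : E₁.G, E₂.π (θ g) = E₁.π g)
    ∧ ∀ (q : Q) (g : E₁.G), θ (E₁.act q g) = E₂.act q (θ g)

namespace QExtAux

variable {Q H K}

open InvariantCohomology Multiplicative

lemma shuffle {A : Type*} [AddCommGroup A] {a b c d : A} (h : a - b + c - d = 0) :
    d + b = a + c := by
  have h2 : a + c - (d + b) = a - b + c - d := by abel
  have h3 : a + c - (d + b) = 0 := by rw [h2, h]
  exact (sub_eq_zero.mp h3).symm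

lemma shuffle' {A : Type*} [AddCommGroup A] {a b c d : A} (h : d + b = a + c) :
    a - b + c - d = 0 := by
  have h2 : a - b + c - d = (a + c) - (d + b) := by abel
  rw [h2, ← h, sub_self]

lemma eta1 (g : Fin 1 → H) : ![g 0] = g := by
  ext j; fin_cases j <;> rfl

lemma eta2 (g : Fin 2 → H) : ![g 0, g 1] = g := by
  ext j; fin_cases j <;> rfl

lemma tail3 (g : Fin 3 → H) : Fin.tail g = ![g 1, g 2] := by
  ext j; fin_cases j <;> rfl

lemma init3 (g : Fin 3 → H) : Fin.init g = ![g 0, g 1] := by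
  ext j; fin_cases j <;> rfl

lemma fm3_0 (g : Fin 3 → H) : fm g 0 = ![g 0 * g 1, g 2] := by
  ext j; fin_cases j <;> simp [fm] <;> rfl

lemma fm3_1 (g : Fin 3 → H) : fm g 1 = ![g 0, g 1 * g 2] := by
  ext j; fin_cases j <;> simp [fm] <;> rfl

lemma tail2 (g : Fin 2 → H) : Fin.tail g = ![g 1] := by
  ext j; fin_cases j <;> rfl

lemma init2 (g : Fin 2 → H) : Fin.init g = ![g 0] := by
  ext j; fin_cases j <;> rfl

lemma fm2_0 (g : Fin 2 → H) : fm g 0 = ![g 0 * g 1] := by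
  ext j; fin_cases j <;> simp [fm] <;> rfl

lemma cb_two_apply (f : Cc H K 2) (g : Fin 3 → H) :
    cb H K 2 f g = g 0 • f ![g 1, g 2] - f ![g 0 * g 1, g 2] + f ![g 0, g 1 * g 2]
      - f ![g 0, g 1] := by
  show g 0 • f (Fin.tail g) + _ + _ = _
  rw [tail3, init3, Fin.sum_univ_two, fm3_0, fm3_1]
  norm_num
  abel

lemma cb_one_apply (f : Cc H K 1) (g : Fin 2 → H) :
    cb H K 1 f g = g 0 • f ![g 1] - f ![g 0 * g 1] + f ![g 0] := by
  show g 0 • f (Fin.tail g) + _ + _ = _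
  rw [tail2, init2, Fin.sum_univ_one, fm2_0]
  norm_num
  abel

end QExtAux

namespace QExtAux

variable {Q H K}

lemma mem_invCc_one_iff (c : Cc H K 1) :
    c ∈ invCc H Q K 1 ↔ ∀ (q : Q) (x : H), c ![q • x] = q • c ![x] := by
  constructor
  · intro hm q x
    have h := congrFun (hm q) ![q • x]
    have h2 : (q⁻¹ • ![q • x] : Fin 1 → H) = ![x] := by
      ext j; fin_cases j; simp
    calc c ![q • x] = q • c (q⁻¹ • ![q • x]) := h.symm
      _ = q • c ![x] := by rw [h2]
  · intro hp q
    funext g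
    show q • c (q⁻¹ • g) = c g
    have h2 : (q⁻¹ • g : Fin 1 → H) = ![q⁻¹ • g 0] := by
      ext j; fin_cases j; simp
    rw [h2, ← hp q (q⁻¹ • g 0)]
    simp [eta1]

lemma mem_invCc_two_iff (f : Cc H K 2) :
    f ∈ invCc H Q K 2 ↔ ∀ (q : Q) (x y : H), f ![q • x, q • y] = q • f ![x, y] := by
  constructor
  · intro hm q x y
    have h := congrFun (hm q) ![q • x, q • y]
    have h2 : (q⁻¹ • ![q • x, q • y] : Fin 2 → H) = ![x, y] := by
      ext j; fin_cases j <;> simp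
    calc f ![q • x, q • y] = q • f (q⁻¹ • ![q • x, q • y]) := h.symm
      _ = q • f ![x, y] := by rw [h2]
  · intro hp q
    funext g
    show q • f (q⁻¹ • g) = f g
    have h2 : (q⁻¹ • g : Fin 2 → H) = ![q⁻¹ • g 0, q⁻¹ • g 1] := by
      ext j; fin_cases j <;> simp
    rw [h2, ← hp q (q⁻¹ • g 0) (q⁻¹ • g 1)]
    simp [eta2]

lemma mem_ker_cb_two_iff (f : Cc H K 2) :
    f ∈ (cb H K 2).ker ↔
      ∀ x y z : H, f ![x, y] + f ![x * y, z] = x • f ![y, z] + f ![x, y * z] := by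
  rw [AddMonoidHom.mem_ker]
  constructor
  · intro h x y z
    have h' := congrFun h ![x, y, z]
    rw [cb_two_apply] at h'
    simp only [Matrix.cons_val_zero, Matrix.cons_val_one, Matrix.head_cons,
      Matrix.cons_val_two, Matrix.tail_cons] at h'
    exact shuffle h'
  · intro hp
    funext g
    rw [cb_two_apply]
    exact shuffle' (hp (g 0) (g 1) (g 2))

lemma mem_ccycQ_two_iff (f : Cc H K 2) :
    f ∈ ccycQ H Q K 2 ↔
      (∀ x y z : H, f ![x, y] + f ![x * y, z] = x • f ![y, z] + f ![x, y * z]) ∧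
      ∀ (q : Q) (x y : H), f ![q • x, q • y] = q • f ![x, y] := by
  rw [ccycQ, AddSubgroup.mem_inf, mem_ker_cb_two_iff, mem_invCc_two_iff]

end QExtAux

namespace QExtAux

variable {Q H K}

section Std

variable (σ : H → H → K)

/-- The group structure on `K × H` twisted by a normalized 2-cocycle. -/
def stdGroup (hσ : ∀ x y z : H, σ x y + σ (x * y) z = x • σ y z + σ x (y * z))
    (h1 : ∀ y, σ 1 y = 0) (h2 : ∀ x, σ x 1 = 0) : Group (K × H) where
  mul p q := (p.1 + p.2 • q.1 + σ p.2 q.2, p.2 * q.2)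
  one := (0, 1)
  inv p := (-(p.2⁻¹ • p.1) - σ p.2⁻¹ p.2, p.2⁻¹)
  mul_assoc p q r := by
    obtain ⟨a, x⟩ := p; obtain ⟨b, y⟩ := q; obtain ⟨c, z⟩ := r
    refine Prod.ext ?_ (mul_assoc x y z)
    show a + x • b + σ x y + (x * y) • c + σ (x * y) z
      = a + x • (b + y • c + σ y z) + σ x (y * z)
    rw [smul_add, smul_add, mul_smul]
    have h := hσ x y z
    have h2 : a + x • b + σ x y + x • y • c + σ (x * y) z
        = a + x • b + x • y • c + (σ x y + σ (x * y) z) := by abel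
    rw [h2, h]; abel
  one_mul p := by
    refine Prod.ext ?_ (one_mul p.2)
    show 0 + (1 : H) • p.1 + σ 1 p.2 = p.1
    rw [h1, one_smul]; abel
  mul_one p := by
    refine Prod.ext ?_ (mul_one p.2)
    show p.1 + p.2 • (0 : K) + σ p.2 1 = p.1
    rw [h2, smul_zero]; abel
  inv_mul_cancel p := by
    refine Prod.ext ?_ (inv_mul_cancel p.2)
    show -(p.2⁻¹ • p.1) - σ p.2⁻¹ p.2 + p.2⁻¹ • p.1 + σ p.2⁻¹ p.2 = 0
    abel

end Std

end QExtAux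

namespace QExtAux

variable {Q H K}

open InvariantCohomology Multiplicative

section Std

variable (σ : H → H → K)
  (hσ : ∀ x y z : H, σ x y + σ (x * y) z = x • σ y z + σ x (y * z))
  (h1 : ∀ y, σ 1 y = 0) (h2 : ∀ x, σ x 1 = 0)
  (hinv : ∀ (q : Q) (x y : H), σ (q • x) (q • y) = q • σ x y)
  (hc : ∀ (q : Q) (x : H) (a : K), q • x • a = (q • x) • q • a)

/-- The standard `Q`-equivariant extension built from a normalized invariant 2-cocycle. -/
def stdExt : QExt Q H K :=
  letI : Group (K × H) := stdGroup σ hσ h1 h2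
  { G := K × H
    grp := stdGroup σ hσ h1 h2
    ι := { toFun := fun k => (k.toAdd, 1)
           map_one' := by refine Prod.ext ?_ rfl; rfl
           map_mul' := fun k k' => by
             refine Prod.ext ?_ (one_mul 1).symm
             show toAdd (k * k') = k.toAdd + (1 : H) • k'.toAdd + σ 1 1
             rw [h1, one_smul, toAdd_mul]; abel }
    π := { toFun := fun p => p.2
           map_one' := rfl
           map_mul' := fun p q => rfl }
    act := { toFun := fun q =>
               { toFun := fun p => (q • p.1, q • p.2)
                 invFun := fun p => (q⁻¹ • p.1, q⁻¹ • p.2)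
                 left_inv := fun p => by
                   refine Prod.ext ?_ ?_ <;> simp
                 right_inv := fun p => by
                   refine Prod.ext ?_ ?_ <;> simp
                 map_mul' := fun p r => by
                   refine Prod.ext ?_ (smul_mul' q p.2 r.2)
                   show q • (p.1 + p.2 • r.1 + σ p.2 r.2)
                     = q • p.1 + (q • p.2) • (q • r.1) + σ (q • p.2) (q • r.2)
                   rw [smul_add, smul_add, hinv, ← hc] }
             map_one' := by
               refine MulEquiv.ext fun p => Prod.ext ?_ ?_ <;> simp
             map_mul' := fun q q' => by
               refine MulEquiv.ext fun p => Prod.ext ?_ ?_ <;>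
                 simp [mul_smul] <;> rfl }
    ι_injective := fun k k' hkk => by
      have := congrArg Prod.fst hkk
      exact toAdd.injective this
    π_surjective := fun x => ⟨(0, x), rfl⟩
    range_eq_ker := by
      ext p
      constructor
      · rintro ⟨k, rfl⟩
        rw [MonoidHom.mem_ker]
        rfl
      · intro hp
        rw [MonoidHom.mem_ker] at hp
        have hp2 : p.2 = 1 := hp
        exact ⟨ofAdd p.1, Prod.ext rfl hp2.symm⟩
    act_ι := fun q k => Prod.ext rfl (smul_one q)
    act_π := fun q g => rfl
    conj_ι := fun g k => by
      obtain ⟨a, x⟩ := g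
      refine Prod.ext ?_ ?_
      · show a + x • k.toAdd + σ x 1 + (x * 1) • (-(x⁻¹ • a) - σ x⁻¹ x)
          + σ (x * 1) x⁻¹ = x • k.toAdd
        have hx : σ x x⁻¹ = x • σ x⁻¹ x := by
          have := hσ x x⁻¹ x
          rw [mul_inv_cancel, inv_mul_cancel, h1, h2] at this
          rw [add_zero, add_zero] at this
          exact this
        simp only [mul_one, h2, smul_sub, smul_neg, smul_inv_smul, add_zero]
        rw [hx]
        abel
      · show x * 1 * x⁻¹ = 1
        rw [mul_one, mul_inv_cancel]
    exists_section := by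
      refine ⟨fun x => (0, x), fun x => rfl, rfl, fun q x => Prod.ext ?_ rfl⟩
      show q • (0 : K) = 0
      simp }

end Std

end QExtAux

namespace QExtAux

variable {Q H K}

open InvariantCohomology Multiplicative

attribute [instance] QExt.grp

section Ext

variable (E : QExt Q H K)

/-- Recover the `K`-component of an element of the kernel. -/
noncomputable def kOf (g : E.G) : K := Multiplicative.toAdd (Function.invFun E.ι g)

lemma ι_kOf {g : E.G} (hg : E.π g = 1) : E.ι (ofAdd (kOf E g)) = g := by
  have hg' : g ∈ E.π.ker := hg
  rw [← E.range_eq_ker] at hg'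
  obtain ⟨m, hm⟩ := hg'
  have h : E.ι (Function.invFun E.ι g) = g := Function.invFun_eq ⟨m, hm⟩
  simpa [kOf] using h

lemma ι_inj' {a b : K} (h : E.ι (ofAdd a) = E.ι (ofAdd b)) : a = b :=
  ofAdd.injective (E.ι_injective h)

lemma swap_ι (g : E.G) (m : Multiplicative K) :
    g * E.ι m = E.ι (ofAdd (E.π g • m.toAdd)) * g := by
  have h := E.conj_ι g m
  calc g * E.ι m = g * E.ι m * g⁻¹ * g := by group
    _ = E.ι (ofAdd (E.π g • m.toAdd)) * g := by rw [h]

/-- The 2-cocycle associated to a section `s`. -/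
noncomputable def σOf (s : H → E.G) : H → H → K :=
  fun x y => kOf E (s x * s y * (s (x * y))⁻¹)

variable (s : H → E.G)

lemma ι_σOf (hs : ∀ x, E.π (s x) = x) (x y : H) :
    E.ι (ofAdd (σOf E s x y)) = s x * s y * (s (x * y))⁻¹ := by
  apply ι_kOf
  rw [map_mul, map_mul, map_inv, hs, hs, hs, mul_inv_cancel]

lemma sec_mul (hs : ∀ x, E.π (s x) = x) (x y : H) :
    s x * s y = E.ι (ofAdd (σOf E s x y)) * s (x * y) := by
  rw [ι_σOf E s hs]; group

lemma σOf_cocycle (hs : ∀ x, E.π (s x) = x) (x y z : H) :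
    σOf E s x y + σOf E s (x * y) z = x • σOf E s y z + σOf E s x (y * z) := by
  apply ι_inj' E
  have h1 : s x * s y * s z
      = E.ι (ofAdd (σOf E s x y)) * E.ι (ofAdd (σOf E s (x * y) z)) * s (x * y * z) := by
    rw [sec_mul E s hs x y, mul_assoc, sec_mul E s hs (x * y) z, ← mul_assoc]
  have h2 : s x * s y * s z
      = E.ι (ofAdd (x • σOf E s y z)) * E.ι (ofAdd (σOf E s x (y * z))) * s (x * y * z) := by
    rw [mul_assoc, sec_mul E s hs y z, ← mul_assoc, swap_ι E (s x), hs x]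
    rw [mul_assoc, sec_mul E s hs x (y * z), ← mul_assoc, ← mul_assoc x y z]
    simp only [toAdd_ofAdd]
  have h3 := h1.symm.trans h2
  have h4 := mul_right_cancel h3
  rw [ofAdd_add, ofAdd_add, map_mul, map_mul]
  exact h4

lemma σOf_invariant (hs : ∀ x, E.π (s x) = x)
    (hq : ∀ (q : Q) (x : H), E.act q (s x) = s (q • x)) (q : Q) (x y : H) :
    σOf E s (q • x) (q • y) = q • σOf E s x y := by
  apply ι_inj' E
  calc E.ι (ofAdd (σOf E s (q • x) (q • y)))
      = s (q • x) * s (q • y) * (s ((q • x) * (q • y)))⁻¹ := ι_σOf E s hs _ _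
    _ = E.act q (s x * s y * (s (x * y))⁻¹) := by
        rw [map_mul, map_mul, map_inv, hq, hq, ← smul_mul' q x y, hq]
    _ = E.act q (E.ι (ofAdd (σOf E s x y))) := by rw [ι_σOf E s hs]
    _ = E.ι (ofAdd (q • σOf E s x y)) := by rw [E.act_ι]; simp

lemma σOf_one_left (hs : ∀ x, E.π (s x) = x) (hs0 : s 1 = 1) (y : H) :
    σOf E s 1 y = 0 := by
  apply ι_inj' E (b := 0)
  rw [ι_σOf E s hs, hs0, one_mul, one_mul, mul_inv_cancel, ofAdd_zero, map_one]

lemma σOf_one_right (hs : ∀ x, E.π (s x) = x) (hs0 : s 1 = 1) (x : H) :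
    σOf E s x 1 = 0 := by
  apply ι_inj' E (b := 0)
  rw [ι_σOf E s hs, hs0, mul_one, mul_one, mul_inv_cancel, ofAdd_zero, map_one]

/-- The difference 1-cochain of two sections. -/
noncomputable def cdiffOf (s s' : H → E.G) : H → K := fun x => kOf E (s' x * (s x)⁻¹)

variable (s' : H → E.G)

lemma ι_cdiffOf (hs : ∀ x, E.π (s x) = x) (hs' : ∀ x, E.π (s' x) = x) (x : H) :
    E.ι (ofAdd (cdiffOf E s s' x)) = s' x * (s x)⁻¹ := by
  apply ι_kOf
  rw [map_mul, map_inv, hs, hs', mul_inv_cancel]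

lemma s'_eq (hs : ∀ x, E.π (s x) = x) (hs' : ∀ x, E.π (s' x) = x) (x : H) :
    s' x = E.ι (ofAdd (cdiffOf E s s' x)) * s x := by
  rw [ι_cdiffOf E s s' hs hs']; group

lemma cdiffOf_rel (hs : ∀ x, E.π (s x) = x) (hs' : ∀ x, E.π (s' x) = x) (x y : H) :
    σOf E s' x y = σOf E s x y
      + (x • cdiffOf E s s' y - cdiffOf E s s' (x * y) + cdiffOf E s s' x) := by
  set c := cdiffOf E s s' with hcdef
  apply ι_inj' E
  have hR : E.ι (ofAdd (σOf E s x y + (x • c y - c (x * y) + c x)))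
      = E.ι (ofAdd (c x)) * (E.ι (ofAdd (x • c y)) *
          (E.ι (ofAdd (σOf E s x y)) * (E.ι (ofAdd (c (x * y))))⁻¹)) := by
    have harr : σOf E s x y + (x • c y - c (x * y) + c x)
        = c x + (x • c y + (σOf E s x y + -(c (x * y)))) := by abel
    rw [harr, ofAdd_add, ofAdd_add, ofAdd_add, ofAdd_neg, map_mul, map_mul, map_mul, map_inv]
  rw [hR]
  have hconj : s x * E.ι (ofAdd (c y)) * (s x)⁻¹ = E.ι (ofAdd (x • c y)) := by
    rw [E.conj_ι, hs x]; simp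
  calc E.ι (ofAdd (σOf E s' x y))
      = s' x * s' y * (s' (x * y))⁻¹ := ι_σOf E s' hs' x y
    _ = (E.ι (ofAdd (c x)) * s x) * (E.ι (ofAdd (c y)) * s y)
          * ((E.ι (ofAdd (c (x * y)))) * s (x * y))⁻¹ := by
        rw [← s'_eq E s s' hs hs', ← s'_eq E s s' hs hs', ← s'_eq E s s' hs hs']
    _ = E.ι (ofAdd (c x)) * ((s x * E.ι (ofAdd (c y)) * (s x)⁻¹) *
          ((s x * s y * (s (x * y))⁻¹) * (E.ι (ofAdd (c (x * y))))⁻¹)) := by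
        group
    _ = E.ι (ofAdd (c x)) * (E.ι (ofAdd (x • c y)) *
          (E.ι (ofAdd (σOf E s x y)) * (E.ι (ofAdd (c (x * y))))⁻¹)) := by
        rw [hconj, ι_σOf E s hs]

lemma cdiffOf_invariant (hs : ∀ x, E.π (s x) = x) (hs' : ∀ x, E.π (s' x) = x)
    (hq : ∀ (q : Q) (x : H), E.act q (s x) = s (q • x))
    (hq' : ∀ (q : Q) (x : H), E.act q (s' x) = s' (q • x)) (q : Q) (x : H) :
    cdiffOf E s s' (q • x) = q • cdiffOf E s s' x := by
  apply ι_inj' E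
  calc E.ι (ofAdd (cdiffOf E s s' (q • x)))
      = s' (q • x) * (s (q • x))⁻¹ := ι_cdiffOf E s s' hs hs' _
    _ = E.act q (s' x * (s x)⁻¹) := by rw [map_mul, map_inv, hq, hq']
    _ = E.act q (E.ι (ofAdd (cdiffOf E s s' x))) := by rw [ι_cdiffOf E s s' hs hs']
    _ = E.ι (ofAdd (q • cdiffOf E s s' x)) := by rw [E.act_ι]; simp

lemma cdiffOf_one (hs : ∀ x, E.π (s x) = x) (hs' : ∀ x, E.π (s' x) = x)
    (hs0 : s 1 = 1) (hs0' : s' 1 = 1) : cdiffOf E s s' 1 = 0 := by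
  apply ι_inj' E (b := 0)
  rw [ι_cdiffOf E s s' hs hs', hs0, hs0', inv_one, mul_one, ofAdd_zero, map_one]

/-- The chosen normalized equivariant section. -/
noncomputable def sec : H → E.G := E.exists_section.choose

lemma sec_π : ∀ x, E.π (sec E x) = x := E.exists_section.choose_spec.1
lemma sec_one : sec E 1 = 1 := E.exists_section.choose_spec.2.1
lemma sec_act : ∀ (q : Q) (x : H), E.act q (sec E x) = sec E (q • x) :=
  E.exists_section.choose_spec.2.2

end Ext

end QExtAux

namespace QExtAux

variable {Q H K}

open InvariantCohomology Multiplicative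

lemma equivRefl (E : QExt Q H K) : QExtEquiv Q H K E E :=
  ⟨MulEquiv.refl _, fun _ => rfl, fun _ => rfl, fun _ _ => rfl⟩

lemma equivSymm {E₁ E₂ : QExt Q H K} (h : QExtEquiv Q H K E₁ E₂) :
    QExtEquiv Q H K E₂ E₁ := by
  obtain ⟨θ, hι, hπ, hact⟩ := h
  refine ⟨θ.symm, fun k => ?_, fun g => ?_, fun q g => ?_⟩
  · apply θ.injective; rw [θ.apply_symm_apply, hι]
  · rw [← hπ (θ.symm g), θ.apply_symm_apply]
  · apply θ.injective; rw [θ.apply_symm_apply, hact, θ.apply_symm_apply]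

lemma equivTrans {E₁ E₂ E₃ : QExt Q H K} (h12 : QExtEquiv Q H K E₁ E₂)
    (h23 : QExtEquiv Q H K E₂ E₃) : QExtEquiv Q H K E₁ E₃ := by
  obtain ⟨θ, hι, hπ, hact⟩ := h12
  obtain ⟨θ', hι', hπ', hact'⟩ := h23
  refine ⟨θ.trans θ', fun k => ?_, fun g => ?_, fun q g => ?_⟩
  · show θ' (θ _) = _; rw [hι, hι']
  · show E₃.π (θ' (θ g)) = _; rw [hπ', hπ]
  · show θ' (θ (E₁.act q g)) = E₃.act q (θ' (θ g)); rw [hact, hact']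

lemma kOf_ι (E : QExt Q H K) (a : K) : kOf E (E.ι (ofAdd a)) = a := by
  apply ι_inj' E
  apply ι_kOf
  rw [← MonoidHom.mem_ker, ← E.range_eq_ker]
  exact ⟨ofAdd a, rfl⟩

section Std

variable (σ : H → H → K)
  (hσ : ∀ x y z : H, σ x y + σ (x * y) z = x • σ y z + σ x (y * z))
  (h1 : ∀ y, σ 1 y = 0) (h2 : ∀ x, σ x 1 = 0)
  (hinv : ∀ (q : Q) (x y : H), σ (q • x) (q • y) = q • σ x y)
  (hc : ∀ (q : Q) (x : H) (a : K), q • x • a = (q • x) • q • a)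

/-- The canonical section of the standard extension. -/
def stdSec : H → (stdExt σ hσ h1 h2 hinv hc).G := fun x => ((0 : K), x)

lemma stdSec_π : ∀ x, (stdExt σ hσ h1 h2 hinv hc).π (stdSec σ hσ h1 h2 hinv hc x) = x :=
  fun _ => rfl

lemma stdSec_one : stdSec σ hσ h1 h2 hinv hc 1 = 1 := rfl

lemma stdSec_act : ∀ (q : Q) (x : H),
    (stdExt σ hσ h1 h2 hinv hc).act q (stdSec σ hσ h1 h2 hinv hc x)
      = stdSec σ hσ h1 h2 hinv hc (q • x) := by
  intro q x
  refine Prod.ext ?_ rfl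
  show q • (0 : K) = 0
  simp

lemma std_σOf (x y : H) :
    σOf (stdExt σ hσ h1 h2 hinv hc) (stdSec σ hσ h1 h2 hinv hc) x y = σ x y := by
  set E := stdExt σ hσ h1 h2 hinv hc
  set s := stdSec σ hσ h1 h2 hinv hc
  apply ι_inj' E
  have key : E.ι (ofAdd (σ x y)) * s (x * y) = s x * s y := by
    refine Prod.ext ?_ (one_mul _)
    show σ x y + 1 • (0 : K) + σ 1 (x * y) = 0 + x • (0 : K) + σ x y
    rw [h1, one_smul, smul_zero]; abel
  have h := sec_mul E s (stdSec_π σ hσ h1 h2 hinv hc) x y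
  rw [key.symm] at h
  exact mul_right_cancel h.symm

/-- An extension is equivalent to the standard extension on its associated cocycle. -/
lemma ext_equiv_std (E : QExt Q H K) :
    QExtEquiv Q H K
      (stdExt (σOf E (sec E)) (σOf_cocycle E (sec E) (sec_π E))
        (σOf_one_left E (sec E) (sec_π E) (sec_one E))
        (σOf_one_right E (sec E) (sec_π E) (sec_one E))
        (σOf_invariant E (sec E) (sec_π E) (sec_act E)) hc) E := by
  classical
  set σ₀ := σOf E (sec E) with hσ₀
  refine ⟨{ toFun := fun p => E.ι (ofAdd p.1) * sec E p.2
            invFun := fun g => (kOf E (g * (sec E (E.π g))⁻¹), E.π g)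
            left_inv := ?_
            right_inv := ?_
            map_mul' := ?_ }, ?_, ?_, ?_⟩
  · rintro ⟨a, x⟩
    have hπ : E.π (E.ι (ofAdd a) * sec E x) = x := by
      rw [map_mul, sec_π]
      have : E.π (E.ι (ofAdd a)) = 1 := by
        rw [← MonoidHom.mem_ker, ← E.range_eq_ker]; exact ⟨ofAdd a, rfl⟩
      rw [this, one_mul]
    refine Prod.ext ?_ hπ
    show kOf E (E.ι (ofAdd a) * sec E x * (sec E (E.π (E.ι (ofAdd a) * sec E x)))⁻¹) = a
    rw [hπ]
    have : E.ι (ofAdd a) * sec E x * (sec E x)⁻¹ = E.ι (ofAdd a) := by group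
    rw [this, kOf_ι]
  · intro g
    show E.ι (ofAdd (kOf E (g * (sec E (E.π g))⁻¹))) * sec E (E.π g) = g
    have hk : E.π (g * (sec E (E.π g))⁻¹) = 1 := by
      rw [map_mul, map_inv, sec_π, mul_inv_cancel]
    rw [ι_kOf E hk]
    group
  · rintro ⟨a, x⟩ ⟨b, y⟩
    show E.ι (ofAdd (a + x • b + σ₀ x y)) * sec E (x * y)
      = (E.ι (ofAdd a) * sec E x) * (E.ι (ofAdd b) * sec E y)
    have hswap : sec E x * E.ι (ofAdd b) = E.ι (ofAdd (x • b)) * sec E x := by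
      rw [swap_ι E, sec_π]; simp
    calc E.ι (ofAdd (a + x • b + σ₀ x y)) * sec E (x * y)
        = E.ι (ofAdd a) * E.ι (ofAdd (x • b)) * (E.ι (ofAdd (σ₀ x y)) * sec E (x * y)) := by
          rw [ofAdd_add, ofAdd_add, map_mul, map_mul]; group
      _ = E.ι (ofAdd a) * E.ι (ofAdd (x • b)) * (sec E x * sec E y) := by
          rw [← sec_mul E (sec E) (sec_π E)]
      _ = E.ι (ofAdd a) * (sec E x * E.ι (ofAdd b)) * sec E y := by
          rw [hswap]; group
      _ = (E.ι (ofAdd a) * sec E x) * (E.ι (ofAdd b) * sec E y) := by group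
  · intro k
    show E.ι (ofAdd (toAdd k)) * sec E 1 = E.ι k
    rw [sec_one, mul_one, ofAdd_toAdd]
  · rintro ⟨a, x⟩
    show E.π (E.ι (ofAdd a) * sec E x) = x
    rw [map_mul, sec_π]
    have : E.π (E.ι (ofAdd a)) = 1 := by
      rw [← MonoidHom.mem_ker, ← E.range_eq_ker]; exact ⟨ofAdd a, rfl⟩
    rw [this, one_mul]
  · rintro q ⟨a, x⟩
    show E.ι (ofAdd (q • a)) * sec E (q • x) = E.act q (E.ι (ofAdd a) * sec E x)
    rw [map_mul, E.act_ι, sec_act]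
    simp

end Std

section StdEquiv

variable (σ σ' : H → H → K)
  (hσ : ∀ x y z : H, σ x y + σ (x * y) z = x • σ y z + σ x (y * z))
  (h1 : ∀ y, σ 1 y = 0) (h2 : ∀ x, σ x 1 = 0)
  (hinv : ∀ (q : Q) (x y : H), σ (q • x) (q • y) = q • σ x y)
  (hσ' : ∀ x y z : H, σ' x y + σ' (x * y) z = x • σ' y z + σ' x (y * z))
  (h1' : ∀ y, σ' 1 y = 0) (h2' : ∀ x, σ' x 1 = 0)
  (hinv' : ∀ (q : Q) (x y : H), σ' (q • x) (q • y) = q • σ' x y)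
  (hc : ∀ (q : Q) (x : H) (a : K), q • x • a = (q • x) • q • a)

lemma std_equiv (c : H → K) (hc0 : c 1 = 0)
    (hcinv : ∀ (q : Q) (x : H), c (q • x) = q • c x)
    (hrel : ∀ x y, σ' x y = σ x y + (x • c y - c (x * y) + c x)) :
    QExtEquiv Q H K (stdExt σ hσ h1 h2 hinv hc) (stdExt σ' hσ' h1' h2' hinv' hc) := by
  refine ⟨{ toFun := fun p => (p.1 - c p.2, p.2)
            invFun := fun p => (p.1 + c p.2, p.2)
            left_inv := fun p => by refine Prod.ext ?_ rfl; show p.1 - c p.2 + c p.2 = p.1; abel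
            right_inv := fun p => by refine Prod.ext ?_ rfl; show p.1 + c p.2 - c p.2 = p.1; abel
            map_mul' := ?_ }, ?_, ?_, ?_⟩
  · rintro ⟨a, x⟩ ⟨b, y⟩
    refine Prod.ext ?_ rfl
    show a + x • b + σ x y - c (x * y) = (a - c x) + x • (b - c y) + σ' x y
    rw [hrel x y, smul_sub]
    abel
  · intro k
    refine Prod.ext ?_ rfl
    show toAdd k - c 1 = toAdd k
    rw [hc0, sub_zero]
  · intro g
    rfl
  · rintro q ⟨a, x⟩
    refine Prod.ext ?_ rfl
    show q • a - c (q • x) = q • (a - c x)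
    rw [hcinv, smul_sub]

end StdEquiv

end QExtAux

namespace QExtAux

variable {Q H K}

open InvariantCohomology Multiplicative

lemma pair0 (x y : H) : (![x, y] : Fin 2 → H) 0 = x := rfl

lemma pair1 (x y : H) : (![x, y] : Fin 2 → H) 1 = y := rfl

lemma sing0 (x : H) : (![x] : Fin 1 → H) 0 = x := rfl

/-- The cocycle of an extension w.r.t. the chosen section, as a 2-cochain. -/
noncomputable def Fcoc (E : QExt Q H K) : Cc H K 2 := fun g => σOf E (sec E) (g 0) (g 1)

lemma Fcoc_apply (E : QExt Q H K) (x y : H) : Fcoc E ![x, y] = σOf E (sec E) x y := rfl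

lemma Fcoc_mem (E : QExt Q H K) : Fcoc E ∈ ccycQ H Q K 2 := by
  rw [mem_ccycQ_two_iff]
  constructor
  · intro x y z
    simp only [Fcoc_apply]
    exact σOf_cocycle E (sec E) (sec_π E) x y z
  · intro q x y
    simp only [Fcoc_apply]
    exact σOf_invariant E (sec E) (sec_π E) (sec_act E) q x y

/-- The cohomology class of an extension. -/
noncomputable def Fcls (E : QExt Q H K) : HHQ H Q K 2 :=
  QuotientAddGroup.mk ⟨Fcoc E, Fcoc_mem E⟩

lemma mk_eq_mk {f₁ f₂ : Cc H K 2} (hf₁ : f₁ ∈ ccycQ H Q K 2) (hf₂ : f₂ ∈ ccycQ H Q K 2) :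
    (QuotientAddGroup.mk ⟨f₁, hf₁⟩ : HHQ H Q K 2) = QuotientAddGroup.mk ⟨f₂, hf₂⟩ ↔
      ∃ c ∈ invCc H Q K 1, cb H K 1 c = f₂ - f₁ := by
  rw [QuotientAddGroup.eq, AddSubgroup.mem_addSubgroupOf]
  have hcoe : ((-(⟨f₁, hf₁⟩ : ccycQ H Q K 2) + ⟨f₂, hf₂⟩ : ccycQ H Q K 2) : Cc H K 2)
      = f₂ - f₁ := by
    push_cast
    abel
  rw [hcoe]
  show f₂ - f₁ ∈ (invCc H Q K 1).map (cdd H K 2) ↔ _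
  rw [AddSubgroup.mem_map]
  constructor
  · rintro ⟨c, hcm, hcb⟩; exact ⟨c, hcm, hcb⟩
  · rintro ⟨c, hcm, hcb⟩; exact ⟨c, hcm, hcb⟩

lemma Fcls_wd {E₁ E₂ : QExt Q H K} (h : QExtEquiv Q H K E₁ E₂) : Fcls E₁ = Fcls E₂ := by
  obtain ⟨θ, hι, hπ, hact⟩ := h
  set s₂' : H → E₂.G := fun x => θ (sec E₁ x) with hs₂'def
  have hs₂'π : ∀ x, E₂.π (s₂' x) = x := fun x => by rw [hs₂'def]; rw [hπ, sec_π]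
  have hs₂'one : s₂' 1 = 1 := by rw [hs₂'def]; show θ (sec E₁ 1) = 1; rw [sec_one, map_one]
  have hs₂'act : ∀ (q : Q) (x : H), E₂.act q (s₂' x) = s₂' (q • x) := fun q x => by
    rw [hs₂'def]
    show E₂.act q (θ (sec E₁ x)) = θ (sec E₁ (q • x))
    rw [← hact, sec_act]
  have hσeq : ∀ x y, σOf E₂ s₂' x y = σOf E₁ (sec E₁) x y := by
    intro x y
    apply ι_inj' E₂
    calc E₂.ι (ofAdd (σOf E₂ s₂' x y)) = s₂' x * s₂' y * (s₂' (x * y))⁻¹ :=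
          ι_σOf E₂ s₂' hs₂'π x y
      _ = θ (sec E₁ x * sec E₁ y * (sec E₁ (x * y))⁻¹) := by
          rw [map_mul, map_mul, map_inv]
      _ = θ (E₁.ι (ofAdd (σOf E₁ (sec E₁) x y))) := by rw [ι_σOf E₁ (sec E₁) (sec_π E₁)]
      _ = E₂.ι (ofAdd (σOf E₁ (sec E₁) x y)) := hι _
  set cd : H → K := cdiffOf E₂ s₂' (sec E₂) with hcddef
  have hrel : ∀ x y, σOf E₂ (sec E₂) x y
      = σOf E₂ s₂' x y + (x • cd y - cd (x * y) + cd x) :=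
    fun x y => cdiffOf_rel E₂ s₂' (sec E₂) hs₂'π (sec_π E₂) x y
  have hcdinv : ∀ (q : Q) (x : H), cd (q • x) = q • cd x :=
    fun q x => cdiffOf_invariant E₂ s₂' (sec E₂) hs₂'π (sec_π E₂) hs₂'act (sec_act E₂) q x
  rw [Fcls, Fcls]; refine (mk_eq_mk _ _).mpr ?_
  refine ⟨fun g => cd (g 0), ?_, ?_⟩
  · rw [mem_invCc_one_iff]
    intro q x
    show cd ((![q • x] : Fin 1 → H) 0) = q • cd ((![x] : Fin 1 → H) 0)
    rw [sing0, sing0, hcdinv]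
  · show cb H K 1 _ = Fcoc E₂ - Fcoc E₁
    funext g
    rw [cb_one_apply]
    show g 0 • cd ((![g 1] : Fin 1 → H) 0) - cd ((![g 0 * g 1] : Fin 1 → H) 0)
        + cd ((![g 0] : Fin 1 → H) 0) = (Fcoc E₂ - Fcoc E₁) g
    rw [sing0, sing0, sing0]
    show _ = Fcoc E₂ g - Fcoc E₁ g
    show _ = σOf E₂ (sec E₂) (g 0) (g 1) - σOf E₁ (sec E₁) (g 0) (g 1)
    rw [hrel (g 0) (g 1), hσeq (g 0) (g 1)]
    abel

end QExtAux

namespace QExtAux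

variable {Q H K}

open InvariantCohomology Multiplicative

lemma inj_aux (hc : ∀ (q : Q) (x : H) (a : K), q • x • a = (q • x) • q • a)
    {E₁ E₂ : QExt Q H K} (h : Fcls E₁ = Fcls E₂) :
    Quot.mk (QExtEquiv Q H K) E₁ = Quot.mk (QExtEquiv Q H K) E₂ := by
  rw [Fcls, Fcls] at h; replace h := (mk_eq_mk _ _).mp h
  obtain ⟨cc, hccm, hccb⟩ := h
  set cf : H → K := fun x => cc ![x] with hcfdef
  have hcfinv : ∀ (q : Q) (x : H), cf (q • x) = q • cf x := by
    rw [mem_invCc_one_iff] at hccm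
    intro q x; exact hccm q x
  have hrel : ∀ x y, σOf E₂ (sec E₂) x y
      = σOf E₁ (sec E₁) x y + (x • cf y - cf (x * y) + cf x) := by
    intro x y
    have h' := congrFun hccb ![x, y]
    rw [cb_one_apply] at h'
    have h'' : x • cf y - cf (x * y) + cf x
        = σOf E₂ (sec E₂) x y - σOf E₁ (sec E₁) x y := h'
    rw [h'']
    abel
  have hcf1 : cf 1 = 0 := by
    have h0 := hrel 1 1
    rw [σOf_one_left E₂ (sec E₂) (sec_π E₂) (sec_one E₂),
      σOf_one_left E₁ (sec E₁) (sec_π E₁) (sec_one E₁), one_smul, mul_one] at h0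
    have he : cf 1 - cf 1 + cf 1 = cf 1 := by abel
    rw [he, zero_add] at h0
    exact h0.symm
  have step1 : Quot.mk (QExtEquiv Q H K) E₁
      = Quot.mk (QExtEquiv Q H K)
          (stdExt (σOf E₁ (sec E₁)) (σOf_cocycle E₁ (sec E₁) (sec_π E₁))
            (σOf_one_left E₁ (sec E₁) (sec_π E₁) (sec_one E₁))
            (σOf_one_right E₁ (sec E₁) (sec_π E₁) (sec_one E₁))
            (σOf_invariant E₁ (sec E₁) (sec_π E₁) (sec_act E₁)) hc) :=
    Quot.sound (equivSymm (ext_equiv_std hc E₁))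
  have step3 : Quot.mk (QExtEquiv Q H K)
      (stdExt (σOf E₂ (sec E₂)) (σOf_cocycle E₂ (sec E₂) (sec_π E₂))
        (σOf_one_left E₂ (sec E₂) (sec_π E₂) (sec_one E₂))
        (σOf_one_right E₂ (sec E₂) (sec_π E₂) (sec_one E₂))
        (σOf_invariant E₂ (sec E₂) (sec_π E₂) (sec_act E₂)) hc)
      = Quot.mk (QExtEquiv Q H K) E₂ :=
    Quot.sound (ext_equiv_std hc E₂)
  have step2 := Quot.sound
    (std_equiv (σOf E₁ (sec E₁)) (σOf E₂ (sec E₂))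
      (σOf_cocycle E₁ (sec E₁) (sec_π E₁))
      (σOf_one_left E₁ (sec E₁) (sec_π E₁) (sec_one E₁))
      (σOf_one_right E₁ (sec E₁) (sec_π E₁) (sec_one E₁))
      (σOf_invariant E₁ (sec E₁) (sec_π E₁) (sec_act E₁))
      (σOf_cocycle E₂ (sec E₂) (sec_π E₂))
      (σOf_one_left E₂ (sec E₂) (sec_π E₂) (sec_one E₂))
      (σOf_one_right E₂ (sec E₂) (sec_π E₂) (sec_one E₂))
      (σOf_invariant E₂ (sec E₂) (sec_π E₂) (sec_act E₂)) hc
      cf hcf1 hcfinv hrel)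
  exact step1.trans (step2.trans step3)

lemma surj_aux (hc : ∀ (q : Q) (x : H) (a : K), q • x • a = (q • x) • q • a)
    (h : HHQ H Q K 2) : ∃ E : QExt Q H K, Fcls E = h := by
  obtain ⟨a, rfl⟩ := QuotientAddGroup.mk_surjective h
  obtain ⟨f, hf⟩ := a
  have hf' := hf
  rw [mem_ccycQ_two_iff] at hf'
  obtain ⟨hcoc, hinvf⟩ := hf'
  set v : K := f ![1, 1] with hvdef
  have h1y : ∀ y, f ![(1 : H), y] = v := by
    intro y
    have h' := hcoc 1 1 y
    rw [one_mul, one_smul, one_mul] at h'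
    exact (add_right_cancel h').symm
  have hx1 : ∀ x, f ![x, (1 : H)] = x • v := by
    intro x
    have h' := hcoc x 1 1
    rw [mul_one, one_mul] at h'
    exact add_right_cancel h'
  have hqv : ∀ q : Q, q • v = v := by
    intro q
    have h' := hinvf q 1 1
    rw [smul_one] at h'
    exact h'.symm
  set σ0 : H → H → K := fun x y => f ![x, y] - x • v with hσ0def
  have hσ0coc : ∀ x y z, σ0 x y + σ0 (x * y) z = x • σ0 y z + σ0 x (y * z) := by
    intro x y z
    show (f ![x, y] - x • v) + (f ![x * y, z] - (x * y) • v)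
      = x • (f ![y, z] - y • v) + (f ![x, y * z] - x • v)
    rw [mul_smul, smul_sub]
    have e1 : (f ![x, y] - x • v) + (f ![x * y, z] - x • y • v)
        = (f ![x, y] + f ![x * y, z]) - x • v - x • y • v := by abel
    rw [e1, hcoc x y z]
    abel
  have hσ0n1 : ∀ y, σ0 1 y = 0 := by
    intro y; show f ![(1 : H), y] - (1 : H) • v = 0
    rw [h1y, one_smul, sub_self]
  have hσ0n2 : ∀ x, σ0 x 1 = 0 := by
    intro x; show f ![x, (1 : H)] - x • v = 0
    rw [hx1, sub_self]
  have hσ0inv : ∀ (q : Q) (x y : H), σ0 (q • x) (q • y) = q • σ0 x y := by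
    intro q x y
    show f ![q • x, q • y] - (q • x) • v = q • (f ![x, y] - x • v)
    rw [hinvf q x y, smul_sub]
    have e2 : (q • x) • v = q • x • v := by rw [hc q x v, hqv]
    rw [e2]
  refine ⟨stdExt σ0 hσ0coc hσ0n1 hσ0n2 hσ0inv hc, ?_⟩
  set E := stdExt σ0 hσ0coc hσ0n1 hσ0n2 hσ0inv hc with hEdef
  rw [Fcls]; refine (mk_eq_mk _ _).mpr ?_
  set sS : H → E.G := stdSec σ0 hσ0coc hσ0n1 hσ0n2 hσ0inv hc with hsSdef
  have hsSπ : ∀ x, E.π (sS x) = x := stdSec_π σ0 hσ0coc hσ0n1 hσ0n2 hσ0inv hc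
  have hsSact : ∀ (q : Q) (x : H), E.act q (sS x) = sS (q • x) :=
    stdSec_act σ0 hσ0coc hσ0n1 hσ0n2 hσ0inv hc
  have hstd : ∀ x y, σOf E sS x y = σ0 x y := std_σOf σ0 hσ0coc hσ0n1 hσ0n2 hσ0inv hc
  set cd : H → K := cdiffOf E sS (sec E) with hcddef
  have hrel : ∀ x y, σOf E (sec E) x y = σOf E sS x y + (x • cd y - cd (x * y) + cd x) :=
    cdiffOf_rel E sS (sec E) hsSπ (sec_π E)
  have hcdinv : ∀ (q : Q) (x : H), cd (q • x) = q • cd x :=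
    cdiffOf_invariant E sS (sec E) hsSπ (sec_π E) hsSact (sec_act E)
  refine ⟨(fun _ => v) - (fun g => cd (g 0)), ?_, ?_⟩
  · apply AddSubgroup.sub_mem
    · rw [mem_invCc_one_iff]
      intro q x
      show v = q • v
      exact (hqv q).symm
    · rw [mem_invCc_one_iff]
      intro q x
      show cd ((![q • x] : Fin 1 → H) 0) = q • cd ((![x] : Fin 1 → H) 0)
      rw [sing0, sing0, hcdinv]
  · rw [map_sub]
    funext g
    show cb H K 1 _ g - cb H K 1 _ g = (f - Fcoc E) g
    rw [cb_one_apply, cb_one_apply]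
    show (g 0 • v - v + v) - (g 0 • cd ((![g 1] : Fin 1 → H) 0)
        - cd ((![g 0 * g 1] : Fin 1 → H) 0) + cd ((![g 0] : Fin 1 → H) 0))
      = f g - Fcoc E g
    rw [sing0, sing0, sing0]
    have hfg : f g = f ![g 0, g 1] := by rw [eta2]
    show _ = f g - σOf E (sec E) (g 0) (g 1)
    rw [hfg, hrel, hstd]
    show (g 0 • v - v + v) - (g 0 • cd (g 1) - cd (g 0 * g 1) + cd (g 0))
      = f ![g 0, g 1] - ((f ![g 0, g 1] - g 0 • v)
          + (g 0 • cd (g 1) - cd (g 0 * g 1) + cd (g 0)))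
    abel

end QExtAux

/-- The set of equivalence classes of `Q`-equivariant extensions
`0 → K → G → H → 1` admitting a normalized `Q`-equivariant section is in one-to-one
correspondence with the invariant cohomology group `HH²_Q(H, K)`. -/
theorem qext_classes_equiv_HH2
    (hc : ∀ (q : Q) (x : H) (a : K), q • x • a = (q • x) • q • a) :
    Nonempty (Quot (QExtEquiv Q H K) ≃ HHQ H Q K 2) := by
  refine ⟨Equiv.ofBijective
    (Quot.lift QExtAux.Fcls (fun _ _ hab => QExtAux.Fcls_wd hab)) ⟨?_, ?_⟩⟩
  · intro x y hxy
    induction x using Quot.ind with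
    | _ E₁ =>
      induction y using Quot.ind with
      | _ E₂ => exact QExtAux.inj_aux hc hxy
  · intro h
    obtain ⟨E, hE⟩ := QExtAux.surj_aux hc h
    exact ⟨Quot.mk _ E, hE⟩
end
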